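/- Let n, m ≥ 1 and Q = n·m. With Ω, g₀ and g_A as follows: Ω is a set of 2Q elements {1,…,Q} × {ket, bra} with replicas grouped into m blocks of n positions; g₀ is the product of the Q disjoint transpositions exchanging the ket and bra copies of each replica; g_A is the product, over all blocks j and positions i, of the disjoint transpositions swapping the ket at position i of block j with the bra at position i+1 (mod n) of block j. Then C(g₀⁻¹ g_A) = 2m: the permutation g₀⁻¹ g_A has exactly 2m cycles (two cycles of length n within each of the m blocks). -/

import Mathlib

/-- `cycleCount g` is the number of orbits of the permutation `g` acting on its underlying
set, i.e. the number of cycles of `g` counting fixed points as cycles of length one. -/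
noncomputable def cycleCount {α : Type*} (g : Equiv.Perm α) : ℕ :=
  Nat.card (MulAction.orbitRel.Quotient (Subgroup.zpowers g) α)

/-- The replica set `Ω = {1,…,Q} × {ket, bra}` with `Q = n·m` replicas grouped into `m`
blocks of `n` positions: an element is a block `j : Fin m`, a position `i : Fin n`, and a
ket/bra label (`false` = ket, `true` = bra). -/
abbrev ReplicaSet (n m : ℕ) := (Fin m × Fin n) × Bool

/-- `g₀`: the product of the `Q = n·m` disjoint transpositions `(k k̄)` exchanging the ket
and bra copies of each replica. -/
def gZero (n m : ℕ) : Equiv.Perm (ReplicaSet n m) :=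
  Equiv.prodCongr (Equiv.refl (Fin m × Fin n)) (Equiv.swap false true)

/-- `g_A`: the product, over all blocks `j` and positions `i`, of the disjoint transpositions
swapping the ket at position `i` of block `j` with the bra at position `i+1 (mod n)` of
block `j`. -/
def gA (n m : ℕ) [NeZero n] : Equiv.Perm (ReplicaSet n m) where
  toFun x := ((x.1.1, if x.2 then x.1.2 - 1 else x.1.2 + 1), !x.2)
  invFun x := ((x.1.1, if x.2 then x.1.2 - 1 else x.1.2 + 1), !x.2)
  left_inv := by rintro ⟨⟨j, i⟩, b⟩; cases b <;> simp
  right_inv := by rintro ⟨⟨j, i⟩, b⟩; cases b <;> simp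

/-- The domain-wall permutation `g₀⁻¹ g_A` has exactly `2m` cycles (two cycles of length
`n` within each of the `m` blocks). -/
theorem cycleCount_gZero_inv_gA (n m : ℕ) [NeZero n] (hn : 1 ≤ n) (hm : 1 ≤ m) :
    cycleCount ((gZero n m)⁻¹ * gA n m) = 2 * m := by
  classical
  set h : Equiv.Perm (ReplicaSet n m) := (gZero n m)⁻¹ * gA n m with hh
  have happ : ∀ x : ReplicaSet n m,
      h x = ((x.1.1, if x.2 then x.1.2 - 1 else x.1.2 + 1), x.2) := by
    rintro ⟨⟨j, i⟩, b⟩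
    cases b <;> simp [hh, gZero, gA, Equiv.Perm.mul_apply, Equiv.Perm.inv_def, Equiv.prodCongr_symm]
  set proj : ReplicaSet n m → Fin m × Bool := fun x => (x.1.1, x.2) with hproj
  have step : ∀ x, proj (h x) = proj x := by
    intro x; rw [happ]
  have stepinv : ∀ x, proj (h⁻¹ x) = proj x := by
    intro x
    conv_rhs => rw [← Equiv.apply_symm_apply h x]
    rw [← Equiv.Perm.inv_def, step]
  have hz : ∀ (k : ℤ) (x : ReplicaSet n m), proj ((h ^ k) x) = proj x := by
    intro k
    induction k using Int.induction_on with
    | zero => simp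
    | succ k ih =>
        intro x
        have : (h ^ ((k : ℤ) + 1)) x = (h ^ (k : ℤ)) (h x) := by
          rw [zpow_add_one]; rfl
        rw [this, ih, step]
    | pred k ih =>
        intro x
        have : (h ^ (-(k : ℤ) - 1)) x = (h ^ (-(k : ℤ))) (h⁻¹ x) := by
          rw [zpow_sub_one]; rfl
        rw [this, ih, stepinv]
  open Fin.NatCast Fin.CommRing in
  have hpow : ∀ (k : ℕ) (j : Fin m) (i : Fin n) (b : Bool),
      (h ^ k) ((j, i), b) = ((j, if b then i - (k : Fin n) else i + (k : Fin n)), b) := by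
    intro k
    induction k with
    | zero => intro j i b; cases b <;> simp
    | succ k ih =>
        intro j i b
        have : (h ^ (k + 1)) ((j, i), b) = (h ^ k) (h ((j, i), b)) := by
          rw [pow_succ]; rfl
        rw [this, happ]
        cases b <;> simp [ih] <;> push_cast <;> ring
  -- the bijection from the orbit quotient to Fin m × Bool
  have hrel : ∀ x y : ReplicaSet n m,
      MulAction.orbitRel (Subgroup.zpowers h) (ReplicaSet n m) x y → proj x = proj y := by
    intro x y hxy
    obtain ⟨⟨g, k, rfl⟩, hg⟩ := hxy
    have : x = (h ^ k) y := hg.symm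
    rw [this, hz]
  let F : MulAction.orbitRel.Quotient (Subgroup.zpowers h) (ReplicaSet n m) → Fin m × Bool :=
    Quotient.lift proj hrel
  have hsurj : Function.Surjective F := by
    rintro ⟨j, b⟩
    exact ⟨⟦((j, 0), b)⟧, rfl⟩
  have hinj : Function.Injective F := by
    rintro x y
    induction x using Quotient.ind with | _ x =>
    induction y using Quotient.ind with | _ y =>
    obtain ⟨⟨j, i⟩, b⟩ := x
    obtain ⟨⟨j', i'⟩, b'⟩ := y
    intro hFeq
    have hj : j = j' := congrArg Prod.fst hFeq
    have hb : b = b' := congrArg Prod.snd hFeq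
    subst hj; subst hb
    apply Quotient.sound
    refine ⟨⟨h ^ ((if b then (i' - i).val else (i - i').val) : ℕ),
      ⟨((if b then (i' - i).val else (i - i').val) : ℕ), (zpow_natCast h _).symm⟩⟩, ?_⟩
    show (h ^ ((if b then (i' - i).val else (i - i').val) : ℕ)) ((j, i'), b) = ((j, i), b)
    rw [hpow]
    cases b
    · simp [Fin.cast_val_eq_self]
    · simp [Fin.cast_val_eq_self, sub_sub_cancel]
  have : Nat.card (MulAction.orbitRel.Quotient (Subgroup.zpowers h) (ReplicaSet n m))
      = Nat.card (Fin m × Bool) := Nat.card_eq_of_bijective F ⟨hinj, hsurj⟩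
  rw [cycleCount, this]
  simp [Nat.card_eq_fintype_card]
  ring
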